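/- Let q be an odd prime. For every positive integer b, B(2q^b) = 2. -/

import Mathlib

open Polynomial

noncomputable def Height (f : Polynomial ℤ) : ℕ :=
  f.support.sup fun i => (f.coeff i).natAbs

noncomputable def Tsum (f : Polynomial ℤ) : ℕ :=
  ∑ i ∈ f.support, (f.coeff i).natAbs

noncomputable def B (n : ℕ) : ℕ :=
  sSup {h : ℕ | ∃ f : Polynomial ℤ, f ∣ X ^ n - 1 ∧ Height f = h}

open Finset
set_option linter.unusedVariables false
set_option linter.deprecated false


def Ht1 (f : Polynomial ℤ) : Prop := ∀ n, (f.coeff n).natAbs ≤ 1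

def GoodA (q : ℕ) (A : Polynomial ℤ) : Prop :=
  ∀ i j : ℕ, A.coeff i ≠ 0 → A.coeff j ≠ 0 → i % q = j % q → i = j

lemma ht1_one : Ht1 1 := by
  intro n; rw [coeff_one]; split <;> simp

lemma goodA_one (q : ℕ) : GoodA q 1 := by
  intro i j hi hj _
  rw [coeff_one] at hi hj
  by_contra
  rcases eq_or_ne i 0 with h | h
  · subst h; exact hj (by simpa using (by split at hj <;> simp_all))
  · exact hi (by simp [h])

lemma ht1_mul_expand {q : ℕ} (hq : 0 < q) {A V : Polynomial ℤ}
    (hA : Ht1 A) (hG : GoodA q A) (hV : Ht1 V) : Ht1 (A * expand ℤ q V) := by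
  intro N
  rw [coeff_mul]
  set F : ℕ × ℕ → ℤ := fun x => A.coeff x.1 * (expand ℤ q V).coeff x.2 with hF
  have key : ∀ x ∈ Finset.HasAntidiagonal.antidiagonal N, ∀ y ∈ Finset.HasAntidiagonal.antidiagonal N,
      F x ≠ 0 → F y ≠ 0 → x = y := by
    rintro ⟨i, j⟩ hx ⟨i', j'⟩ hy hFx hFy
    simp only [Finset.HasAntidiagonal.mem_antidiagonal] at hx hy
    have hAi : A.coeff i ≠ 0 := fun h => hFx (by simp [hF, h])
    have hAi' : A.coeff i' ≠ 0 := fun h => hFy (by simp [hF, h])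
    have hqj : q ∣ j := by
      by_contra hd
      exact hFx (by simp [hF, coeff_expand hq, hd])
    have hqj' : q ∣ j' := by
      by_contra hd
      exact hFy (by simp [hF, coeff_expand hq, hd])
    obtain ⟨c, rfl⟩ := hqj
    obtain ⟨c', rfl⟩ := hqj'
    have hmod : i % q = i' % q := by
      have h1 : (i + q * c) % q = i % q := Nat.add_mul_mod_self_left i q c
      have h2 : (i' + q * c') % q = i' % q := Nat.add_mul_mod_self_left i' q c'
      rw [← h1, ← h2, hx, hy]
    have hii : i = i' := hG i i' hAi hAi' hmod
    have : q * c = q * c' := by omega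
    have : c = c' := by
      exact Nat.eq_of_mul_eq_mul_left hq this
    simp [hii, this]
  by_cases hex : ∃ x ∈ Finset.HasAntidiagonal.antidiagonal N, F x ≠ 0
  · obtain ⟨x₀, hx₀, hFx₀⟩ := hex
    rw [Finset.sum_eq_single_of_mem x₀ hx₀ (fun y hy hne => by
      by_contra hFy
      exact hne (key y hy x₀ hx₀ hFy hFx₀))]
    calc (F x₀).natAbs = (A.coeff x₀.1).natAbs * ((expand ℤ q V).coeff x₀.2).natAbs := by
          rw [hF]; exact Int.natAbs_mul _ _
      _ ≤ 1 * 1 := by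
          apply Nat.mul_le_mul (hA _)
          rw [coeff_expand hq]
          split
          · exact hV _
          · simp
      _ = 1 := by norm_num
  · push_neg at hex
    rw [Finset.sum_eq_zero hex]
    simp


section Base
variable (q : ℕ)

noncomputable def phi : Polynomial ℤ := ∑ j ∈ Finset.range q, X ^ j
noncomputable def psi : Polynomial ℤ := ∑ j ∈ Finset.range q, (-X) ^ j
noncomputable def phi2 : Polynomial ℤ := ∑ j ∈ Finset.range q, (X ^ 2) ^ j

lemma phi_coeff (k : ℕ) : (phi q).coeff k = if k < q then 1 else 0 := by
  rw [phi, finset_sum_coeff]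
  simp only [coeff_X_pow]
  rw [Finset.sum_ite_eq (Finset.range q) k (fun _ => (1 : ℤ))]
  simp

lemma negX_pow_coeff (j k : ℕ) :
    ((-X : Polynomial ℤ) ^ j).coeff k = (-1) ^ j * (if k = j then 1 else 0) := by
  rw [neg_pow, ← C_1, ← C_neg, ← C_pow, coeff_C_mul, coeff_X_pow]

lemma psi_coeff (k : ℕ) : (psi q).coeff k = if k < q then (-1) ^ k else 0 := by
  rw [psi, finset_sum_coeff]
  simp only [negX_pow_coeff]
  simp only [mul_ite, mul_one, mul_zero]
  rw [Finset.sum_ite_eq (Finset.range q) k (fun j => ((-1:ℤ)) ^ j)]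
  simp

lemma phi2_coeff (k : ℕ) :
    (phi2 q).coeff k = if (2 ∣ k ∧ k < 2 * q) then 1 else 0 := by
  rw [phi2, finset_sum_coeff]
  simp only [← pow_mul, coeff_X_pow]
  by_cases h : 2 ∣ k ∧ k < 2 * q
  · obtain ⟨⟨m, rfl⟩, hlt⟩ := h
    rw [Finset.sum_eq_single m]
    · simp; omega
    · intro j _ hne; rw [if_neg (by omega)]
    · intro hm; exfalso; apply hm; rw [Finset.mem_range]; omega
  · rw [if_neg h, Finset.sum_eq_zero]
    intro j hj
    rw [Finset.mem_range] at hj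
    rw [if_neg (by rintro rfl; exact h ⟨⟨j, mul_comm j 2 ▸ rfl⟩, by omega⟩)]

end Base

section Facts
variable {q : ℕ} (hq : 1 < q) (hodd : Odd q)

lemma ht1_phi : Ht1 (phi q) := by
  intro n; rw [phi_coeff]; split <;> simp

lemma ht1_psi : Ht1 (psi q) := by
  intro n; rw [psi_coeff]; split
  · rcases Nat.even_or_odd n with h | h
    · rw [Even.neg_one_pow h]; simp
    · rw [Odd.neg_one_pow h]; simp
  · simp

lemma ht1_phi2 : Ht1 (phi2 q) := by
  intro n; rw [phi2_coeff]; split <;> simp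

lemma goodA_phi : GoodA q (phi q) := by
  intro i j hi hj hm
  rw [phi_coeff] at hi hj
  have h1 : i < q := by by_contra h; exact hi (if_neg h)
  have h2 : j < q := by by_contra h; exact hj (if_neg h)
  rwa [Nat.mod_eq_of_lt h1, Nat.mod_eq_of_lt h2] at hm

lemma goodA_psi : GoodA q (psi q) := by
  intro i j hi hj hm
  rw [psi_coeff] at hi hj
  have h1 : i < q := by by_contra h; exact hi (if_neg h)
  have h2 : j < q := by by_contra h; exact hj (if_neg h)
  rwa [Nat.mod_eq_of_lt h1, Nat.mod_eq_of_lt h2] at hm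

lemma goodA_phi2 (hodd : Odd q) : GoodA q (phi2 q) := by
  intro i j hi hj hm
  rw [phi2_coeff] at hi hj
  have h1 : 2 ∣ i ∧ i < 2 * q := by by_contra h; exact hi (if_neg h)
  have h2 : 2 ∣ j ∧ j < 2 * q := by by_contra h; exact hj (if_neg h)
  obtain ⟨⟨a, rfl⟩, ha⟩ := h1
  obtain ⟨⟨c, rfl⟩, hc⟩ := h2
  -- 2a ≡ 2c mod q, both < 2q, q odd ⇒ a = c
  obtain ⟨r, hr⟩ := hodd
  rcases le_or_gt (2 * a) (2 * c) with h | h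
  · have hd : q ∣ 2 * c - 2 * a := (Nat.modEq_iff_dvd' h).mp hm
    obtain ⟨e, he⟩ := hd
    have he' : e = 0 ∨ e = 1 ∨ 2 ≤ e := by omega
    rcases he' with rfl | rfl | h2
    · omega
    · omega
    · have := Nat.mul_le_mul_left q h2
      omega
  · have hd : q ∣ 2 * a - 2 * c := (Nat.modEq_iff_dvd' h.le).mp hm.symm
    obtain ⟨e, he⟩ := hd
    have he' : e = 0 ∨ e = 1 ∨ 2 ≤ e := by omega
    rcases he' with rfl | rfl | h2
    · omega
    · omega
    · have := Nat.mul_le_mul_left q h2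
      omega

lemma phi_mul_psi (hodd : Odd q) : phi q * psi q = phi2 q := by
  have hX2 : (X ^ 2 - 1 : Polynomial ℤ) ≠ 0 := by
    intro h
    have := congrArg (fun p => Polynomial.coeff p 0) h
    simp [coeff_X_pow] at this
  apply mul_right_cancel₀ hX2
  have h1 : (phi q) * (X - 1) = X ^ q - 1 := by
    rw [phi]; exact geom_sum_mul X q
  have h2 : (psi q) * (-X - 1) = (-X) ^ q - 1 := by
    rw [psi]; exact geom_sum_mul (-X) q
  have h2' : (psi q) * (X + 1) = X ^ q + 1 := by
    have := h2
    rw [hodd.neg_pow] at this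
    have : psi q * (X + 1) = -(psi q * (-X - 1)) := by ring
    rw [this, h2, hodd.neg_pow]; ring
  have h3 : (phi2 q) * (X ^ 2 - 1) = X ^ (2 * q) - 1 := by
    rw [phi2]
    have := geom_sum_mul (X ^ 2 : Polynomial ℤ) q
    rw [← pow_mul] at this
    rw [this]
  calc phi q * psi q * (X ^ 2 - 1) = (phi q * (X - 1)) * (psi q * (X + 1)) := by ring
    _ = (X ^ q - 1) * (X ^ q + 1) := by rw [h1, h2']
    _ = X ^ (2 * q) - 1 := by rw [mul_comm 2 q, pow_mul]; ring
    _ = phi2 q * (X ^ 2 - 1) := h3.symm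

end Facts

lemma ht1_nested {q : ℕ} (hq : 0 < q) :
    ∀ (k : ℕ) (a : ℕ → Polynomial ℤ), (∀ i, Ht1 (a i) ∧ GoodA q (a i)) →
    Ht1 (∏ i ∈ Finset.range k, expand ℤ (q ^ i) (a i)) := by
  intro k
  induction k with
  | zero => intro a _; simpa using ht1_one
  | succ k ih =>
    intro a ha
    rw [Finset.prod_range_succ']
    have hrw : ∀ i : ℕ, expand ℤ (q ^ (i + 1)) (a (i + 1))
        = expand ℤ q (expand ℤ (q ^ i) (a (i + 1))) := by
      intro i
      rw [expand_expand]
      congr 1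
      rw [pow_succ, mul_comm]
    simp only [hrw]
    rw [← map_prod, pow_zero, expand_one]
    rw [mul_comm]
    exact ht1_mul_expand hq (ha 0).1 (ha 0).2 (ih (fun i => a (i + 1)) (fun i => ha (i + 1)))

lemma assoc_subset_prod {α : Type*} [CommMonoidWithZero α] [IsCancelMulZero α] :
    ∀ (s : Finset ℕ) (g : ℕ → α), (∀ d ∈ s, Prime (g d)) → ∀ f, f ∣ ∏ d ∈ s, g d →
      ∃ t ⊆ s, Associated f (∏ d ∈ t, g d) := by
  intro s
  induction s using Finset.induction_on with
  | empty =>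
    intro g _ f hf
    refine ⟨∅, Finset.Subset.refl _, ?_⟩
    rw [Finset.prod_empty] at hf ⊢
    exact associated_one_iff_isUnit.mpr (isUnit_of_dvd_one hf)
  | @insert a s ha ih =>
    intro g hg f hf
    rw [Finset.prod_insert ha] at hf
    have hpa : Prime (g a) := hg a (Finset.mem_insert_self a s)
    by_cases hdvd : g a ∣ f
    · obtain ⟨f', rfl⟩ := hdvd
      have hf' : f' ∣ ∏ d ∈ s, g d :=
        (mul_dvd_mul_iff_left hpa.ne_zero).mp hf
      obtain ⟨t, hts, hass⟩ := ih g (fun d hd => hg d (Finset.mem_insert_of_mem hd)) f' hf'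
      refine ⟨insert a t, Finset.insert_subset_insert a hts, ?_⟩
      rw [Finset.prod_insert (fun h => ha (hts h))]
      exact hass.mul_left (g a)
    · obtain ⟨c, hc⟩ := hf
      have : g a ∣ f * c := ⟨∏ d ∈ s, g d, by rw [← hc]⟩

      rcases hpa.dvd_or_dvd this with h | h
      · exact absurd h hdvd
      · obtain ⟨c', rfl⟩ := h
        have : ∏ d ∈ s, g d = f * c' := by
          apply mul_left_cancel₀ hpa.ne_zero
          rw [hc]
          exact mul_left_comm f (g a) c'
        obtain ⟨t, hts, hass⟩ := ih g (fun d hd => hg d (Finset.mem_insert_of_mem hd)) f ⟨c', this⟩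
        exact ⟨t, hts.trans (Finset.subset_insert a s), hass⟩

section Cyclo

lemma cyclo_qpow {q : ℕ} (hq : q.Prime) (i : ℕ) :
    cyclotomic (q ^ (i + 1)) ℤ = expand ℤ (q ^ i) (phi q) := by
  rw [cyclotomic_prime_pow_eq_geom_sum hq, phi, map_sum]
  congr 1
  funext j
  rw [map_pow, expand_X]

lemma cyclo_2qpow {q : ℕ} (hq : q.Prime) (hodd : Odd q) (i : ℕ) :
    cyclotomic (2 * q ^ (i + 1)) ℤ = expand ℤ (q ^ i) (psi q) := by
  have hq2 : ¬ (2 ∣ q ^ (i + 1)) := by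
    intro h
    have h2 := (Nat.Prime.dvd_of_dvd_pow Nat.prime_two h)
    obtain ⟨r, hr⟩ := hodd
    omega
  have key := cyclotomic_expand_eq_cyclotomic_mul (R := ℤ) Nat.prime_two hq2
  have hL : expand ℤ 2 (cyclotomic (q ^ (i + 1)) ℤ)
      = cyclotomic (q ^ (i + 1)) ℤ * expand ℤ (q ^ i) (psi q) := by
    rw [cyclo_qpow hq, expand_expand, mul_comm 2 (q ^ i), ← expand_expand]
    have h2phi : expand ℤ 2 (phi q) = phi2 q := by
      rw [phi, phi2, map_sum]
      congr 1
      funext j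
      rw [map_pow, expand_X]
    rw [h2phi, ← phi_mul_psi hodd, map_mul, ← cyclo_qpow hq]
  rw [hL] at key
  have hcy : cyclotomic (q ^ (i + 1)) ℤ ≠ 0 := (cyclotomic.monic _ _).ne_zero
  have key2 : cyclotomic (q ^ (i + 1)) ℤ * expand ℤ (q ^ i) (psi q)
      = cyclotomic (q ^ (i + 1)) ℤ * cyclotomic (q ^ (i + 1) * 2) ℤ := by
    rw [key]; ring
  have := mul_left_cancel₀ hcy key2
  rw [this, mul_comm 2 (q ^ (i + 1))]

end Cyclo

lemma height_le {f : Polynomial ℤ} {c : ℕ} (h : ∀ n, (f.coeff n).natAbs ≤ c) :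
    Height f ≤ c :=
  Finset.sup_le fun i _ => h i

lemma le_height {f : Polynomial ℤ} {n : ℕ} (h : f.coeff n ≠ 0) :
    (f.coeff n).natAbs ≤ Height f :=
  Finset.le_sup (f := fun i => (f.coeff i).natAbs) (mem_support_iff.mpr h)

lemma coeff_XpowC_mul {W : Polynomial ℤ} (hW : Ht1 W) (k : ℕ) (c : ℤ)
    (hc : c.natAbs ≤ 1) (n : ℕ) : (((X ^ k + C c) * W).coeff n).natAbs ≤ 2 := by
  rw [add_mul, coeff_add, mul_comm (X ^ k) W, coeff_mul_X_pow', coeff_C_mul]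
  calc ((if k ≤ n then W.coeff (n - k) else 0) + c * W.coeff n).natAbs
      ≤ (if k ≤ n then W.coeff (n - k) else 0).natAbs + (c * W.coeff n).natAbs :=
        Int.natAbs_add_le _ _
    _ ≤ 1 + 1 := by
        apply Nat.add_le_add
        · split
          · exact hW _
          · simp
        · rw [Int.natAbs_mul]
          exact Nat.mul_le_mul hc (hW _)
    _ = 2 := rfl

lemma height_XpowC_mul {W : Polynomial ℤ} (hW : Ht1 W) (k : ℕ) (c : ℤ)
    (hc : c.natAbs ≤ 1) : Height ((X ^ k + C c) * W) ≤ 2 :=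
  height_le (coeff_XpowC_mul hW k c hc)

lemma classify_div {q : ℕ} (hq : q.Prime) (hodd : Odd q) (b d : ℕ) (hd : d ∣ 2 * q ^ b) :
    ∃ i ≤ b, d = q ^ i ∨ d = 2 * q ^ i := by
  obtain ⟨d1, d2, h1, h2, rfl⟩ := exists_dvd_and_dvd_of_dvd_mul hd
  obtain ⟨i, hi, rfl⟩ := (Nat.dvd_prime_pow hq).mp h2
  rcases (Nat.prime_two.eq_one_or_self_of_dvd d1 h1) with rfl | rfl
  · exact ⟨i, hi, Or.inl (one_mul _)⟩
  · exact ⟨i, hi, Or.inr rfl⟩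

lemma ht_subset {q : ℕ} (hq : q.Prime) (hodd : Odd q) (b : ℕ)
    (t : Finset ℕ) (ht : t ⊆ (2 * q ^ b).divisors) :
    Height (∏ d ∈ t, cyclotomic d ℤ) ≤ 2 := by
  classical
  set S : Finset ℕ := (Finset.range (b + 1)).filter (fun i => q ^ i ∈ t) with hS
  set T : Finset ℕ := (Finset.range (b + 1)).filter (fun i => 2 * q ^ i ∈ t) with hT
  have htu : t = S.image (fun i => q ^ i) ∪ T.image (fun i => 2 * q ^ i) := by
    ext d
    simp only [Finset.mem_union, Finset.mem_image, hS, hT, Finset.mem_filter, Finset.mem_range]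
    constructor
    · intro hdt
      have hdd := Nat.dvd_of_mem_divisors (ht hdt)
      obtain ⟨i, hi, hcase⟩ := classify_div hq hodd b d hdd
      rcases hcase with rfl | rfl
      · exact Or.inl ⟨i, ⟨by omega, hdt⟩, rfl⟩
      · exact Or.inr ⟨i, ⟨by omega, hdt⟩, rfl⟩
    · rintro (⟨i, ⟨_, hit⟩, rfl⟩ | ⟨i, ⟨_, hit⟩, rfl⟩) <;> exact hit
  have hdisj : Disjoint (S.image (fun i => q ^ i)) (T.image (fun i => 2 * q ^ i)) := by
    rw [Finset.disjoint_left]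
    rintro d hd1 hd2
    simp only [Finset.mem_image] at hd1 hd2
    obtain ⟨i, _, rfl⟩ := hd1
    obtain ⟨j, _, hj⟩ := hd2
    have hqodd : Odd (q ^ i) := hodd.pow
    have heven : Even (2 * q ^ j) := even_two_mul _
    rw [hj] at heven
    exact (Nat.not_even_iff_odd.mpr hqodd) heven
  have hprod : ∏ d ∈ t, cyclotomic d ℤ
      = (∏ i ∈ S, cyclotomic (q ^ i) ℤ) * (∏ i ∈ T, cyclotomic (2 * q ^ i) ℤ) := by
    rw [htu, Finset.prod_union hdisj,
      Finset.prod_image (fun i _ j _ h => Nat.pow_right_injective hq.two_le h),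
      Finset.prod_image (fun i _ j _ h =>
        Nat.pow_right_injective hq.two_le (Nat.eq_of_mul_eq_mul_left two_pos h))]
  set S' := S.erase 0 with hS'
  set T' := T.erase 0 with hT'
  have hSsplit : ∏ i ∈ S, cyclotomic (q ^ i) ℤ
      = (if 0 ∈ S then X - 1 else 1) * ∏ i ∈ S', cyclotomic (q ^ i) ℤ := by
    by_cases h0 : 0 ∈ S
    · rw [if_pos h0, hS', ← Finset.mul_prod_erase S _ h0, pow_zero, cyclotomic_one]
    · rw [if_neg h0, one_mul, hS', Finset.erase_eq_of_notMem h0]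
  have hTsplit : ∏ i ∈ T, cyclotomic (2 * q ^ i) ℤ
      = (if 0 ∈ T then X + 1 else 1) * ∏ i ∈ T', cyclotomic (2 * q ^ i) ℤ := by
    by_cases h0 : 0 ∈ T
    · rw [if_pos h0, hT', ← Finset.mul_prod_erase T _ h0, pow_zero, mul_one, cyclotomic_two]
    · rw [if_neg h0, one_mul, hT', Finset.erase_eq_of_notMem h0]
  have reindex : ∀ (U : Finset ℕ) (g : ℕ → Polynomial ℤ), U ⊆ Finset.range (b + 1) → 0 ∉ U →
      ∏ i ∈ U, g i = ∏ i ∈ Finset.range b, (if i + 1 ∈ U then g (i + 1) else 1) := by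
    intro U g hUb h0U
    have hUeq : U = ((Finset.range b).filter (fun i => i + 1 ∈ U)).image (· + 1) := by
      ext j
      simp only [Finset.mem_image, Finset.mem_filter, Finset.mem_range]
      constructor
      · intro hj
        have hj0 : j ≠ 0 := fun h => h0U (h ▸ hj)
        have hjb : j < b + 1 := Finset.mem_range.mp (hUb hj)
        refine ⟨j - 1, ⟨by omega, ?_⟩, by omega⟩
        have : j - 1 + 1 = j := by omega
        rwa [this]
      · rintro ⟨i, ⟨_, hiU⟩, rfl⟩
        exact hiU
    calc ∏ i ∈ U, g i
        = ∏ i ∈ ((Finset.range b).filter (fun i => i + 1 ∈ U)).image (· + 1), g i := by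
          rw [← hUeq]
      _ = ∏ i ∈ (Finset.range b).filter (fun i => i + 1 ∈ U), g (i + 1) :=
          Finset.prod_image (fun x _ y _ h => by omega)
      _ = ∏ i ∈ Finset.range b, (if i + 1 ∈ U then g (i + 1) else 1) :=
          Finset.prod_filter _ _
  have hSsub : S' ⊆ Finset.range (b + 1) :=
    (Finset.erase_subset _ _).trans (Finset.filter_subset _ _)
  have hTsub : T' ⊆ Finset.range (b + 1) :=
    (Finset.erase_subset _ _).trans (Finset.filter_subset _ _)
  have hP := reindex S' (fun i => cyclotomic (q ^ i) ℤ) hSsub (Finset.notMem_erase 0 S)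
  have hQ := reindex T' (fun i => cyclotomic (2 * q ^ i) ℤ) hTsub (Finset.notMem_erase 0 T)
  set a : ℕ → Polynomial ℤ := fun i =>
    (if i + 1 ∈ S' then phi q else 1) * (if i + 1 ∈ T' then psi q else 1) with ha
  have hWeq : (∏ i ∈ S', cyclotomic (q ^ i) ℤ) * (∏ i ∈ T', cyclotomic (2 * q ^ i) ℤ)
      = ∏ i ∈ Finset.range b, expand ℤ (q ^ i) (a i) := by
    rw [hP, hQ, ← Finset.prod_mul_distrib]
    apply Finset.prod_congr rfl
    intro i _
    rw [ha]
    simp only []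
    rw [map_mul]
    congr 1
    · by_cases h : i + 1 ∈ S'
      · rw [if_pos h, if_pos h, cyclo_qpow hq]
      · rw [if_neg h, if_neg h, map_one]
    · by_cases h : i + 1 ∈ T'
      · rw [if_pos h, if_pos h, cyclo_2qpow hq hodd]
      · rw [if_neg h, if_neg h, map_one]
  have haprop : ∀ i, Ht1 (a i) ∧ GoodA q (a i) := by
    intro i
    rw [ha]
    simp only []
    by_cases h1 : i + 1 ∈ S' <;> by_cases h2 : i + 1 ∈ T'
    · rw [if_pos h1, if_pos h2, phi_mul_psi hodd]
      exact ⟨ht1_phi2, goodA_phi2 hodd⟩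
    · rw [if_pos h1, if_neg h2, mul_one]; exact ⟨ht1_phi, goodA_phi⟩
    · rw [if_neg h1, if_pos h2, one_mul]; exact ⟨ht1_psi, goodA_psi⟩
    · rw [if_neg h1, if_neg h2, mul_one]; exact ⟨ht1_one, goodA_one q⟩
  have hWt : Ht1 (∏ i ∈ Finset.range b, expand ℤ (q ^ i) (a i)) :=
    ht1_nested hq.pos b a haprop
  have htotal : ∏ d ∈ t, cyclotomic d ℤ
      = ((if 0 ∈ S then X - 1 else 1) * (if 0 ∈ T then X + 1 else 1))
        * ∏ i ∈ Finset.range b, expand ℤ (q ^ i) (a i) := by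
    rw [hprod, hSsplit, hTsplit, mul_mul_mul_comm, hWeq]
  rw [htotal]
  by_cases h1 : 0 ∈ S <;> by_cases h2 : 0 ∈ T
  · rw [if_pos h1, if_pos h2]
    have hform : (X - 1 : Polynomial ℤ) * (X + 1) = X ^ 2 + C (-1) := by
      rw [C_neg, C_1]; ring
    rw [hform]
    exact height_XpowC_mul hWt 2 (-1) (by norm_num)
  · rw [if_pos h1, if_neg h2, mul_one]
    have hform : (X - 1 : Polynomial ℤ) = X ^ 1 + C (-1) := by
      rw [C_neg, C_1]; ring
    rw [hform]
    exact height_XpowC_mul hWt 1 (-1) (by norm_num)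
  · rw [if_neg h1, if_pos h2, one_mul]
    have hform : (X + 1 : Polynomial ℤ) = X ^ 1 + C 1 := by
      rw [C_1]; ring
    rw [hform]
    exact height_XpowC_mul hWt 1 1 (by norm_num)
  · rw [if_neg h1, if_neg h2, mul_one]
    have hform : (1 : Polynomial ℤ) = X ^ 0 + C 0 := by
      rw [C_0, pow_zero, add_zero]
    rw [hform]
    exact height_XpowC_mul hWt 0 0 (by norm_num)

lemma height_neg (f : Polynomial ℤ) : Height (-f) = Height f := by
  unfold Height
  rw [support_neg]
  apply Finset.sup_congr rfl
  intro i _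
  rw [coeff_neg, Int.natAbs_neg]

lemma height_of_associated {f g : Polynomial ℤ} (h : Associated f g) : Height f = Height g := by
  obtain ⟨u, hu⟩ := h
  obtain ⟨r, hr, hCr⟩ := Polynomial.isUnit_iff.mp u.isUnit
  rcases Int.isUnit_iff.mp hr with rfl | rfl
  · rw [← hu, ← hCr, C_1, mul_one]
  · rw [← hu, ← hCr]
    have : f * C (-1) = -f := by
      rw [C_neg, C_1]; ring
    rw [this, height_neg]

lemma upper_bound {q : ℕ} (hq : q.Prime) (hodd : Odd q) (b : ℕ) (hb : 0 < b)
    (f : Polynomial ℤ) (hf : f ∣ X ^ (2 * q ^ b) - 1) : Height f ≤ 2 := by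
  have hn : 0 < 2 * q ^ b := Nat.mul_pos two_pos (pow_pos hq.pos b)
  rw [← prod_cyclotomic_eq_X_pow_sub_one hn ℤ] at hf
  obtain ⟨t, hts, hass⟩ := assoc_subset_prod ((2 * q ^ b).divisors)
    (fun d => cyclotomic d ℤ)
    (fun d hd => UniqueFactorizationMonoid.irreducible_iff_prime.mp
      (cyclotomic.irreducible (Nat.pos_of_mem_divisors hd)))
    f hf
  rw [height_of_associated hass]
  exact ht_subset hq hodd b t hts

lemma lower_bound {q : ℕ} (hq : q.Prime) (hodd : Odd q) (b : ℕ) (hb : 0 < b) :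
    ∃ f : Polynomial ℤ, f ∣ X ^ (2 * q ^ b) - 1 ∧ Height f = 2 := by
  haveI : Fact q.Prime := ⟨hq⟩
  have hq3 : 3 ≤ q := by
    rcases hq.two_le.lt_or_eq with h | h
    · omega
    · exfalso; obtain ⟨r, hr⟩ := hodd; omega
  refine ⟨(X + 1) * phi q, ?_, ?_⟩
  · have hn : 0 < 2 * q ^ b := by positivity
    have hsub : ({2, q} : Finset ℕ) ⊆ (2 * q ^ b).divisors := by
      intro d hd
      rw [Nat.mem_divisors]
      rcases Finset.mem_insert.mp hd with rfl | hd
      · exact ⟨dvd_mul_right 2 (q ^ b), hn.ne'⟩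
      · rw [Finset.mem_singleton] at hd
        rw [hd]
        exact ⟨dvd_mul_of_dvd_right (dvd_pow_self q hb.ne') 2, hn.ne'⟩
    have hdvd := Finset.prod_dvd_prod_of_subset _ _ (fun d => cyclotomic d ℤ) hsub
    rw [prod_cyclotomic_eq_X_pow_sub_one hn ℤ] at hdvd
    have hpair : ∏ d ∈ ({2, q} : Finset ℕ), cyclotomic d ℤ = (X + 1) * phi q := by
      rw [Finset.prod_pair (by omega : (2 : ℕ) ≠ q), cyclotomic_two ℤ, cyclotomic_prime ℤ q, phi]
    rwa [hpair] at hdvd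
  · have hco : ∀ n : ℕ, ((X + 1) * phi q).coeff n
        = (if 1 ≤ n ∧ n - 1 < q then 1 else 0) + (if n < q then 1 else 0) := by
      intro n
      have hrw : (X + 1) * phi q = phi q * X ^ 1 + phi q := by ring
      rw [hrw, coeff_add, coeff_mul_X_pow', phi_coeff, phi_coeff]
      congr 1
      by_cases h : 1 ≤ n
      · by_cases h2 : n - 1 < q
        · rw [if_pos h, if_pos h2, if_pos ⟨h, h2⟩]
        · rw [if_pos h, if_neg h2, if_neg (by tauto)]
      · rw [if_neg h, if_neg (by tauto)]
    apply le_antisymm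
    · apply height_le
      intro n
      rw [hco n]
      split <;> split <;> simp
    · have h1 : ((X + 1) * phi q).coeff 1 = 2 := by
        rw [hco 1]
        rw [if_pos (by omega), if_pos (by omega)]
        norm_num
      have := le_height (f := (X + 1) * phi q) (n := 1) (by rw [h1]; norm_num)
      rwa [h1] at this

theorem stmt_14 (q : ℕ) (hq : q.Prime) (hodd : Odd q)
    (b : ℕ) (hb : 0 < b) : B (2 * q ^ b) = 2 := by
  have h2mem : (2 : ℕ) ∈ {h : ℕ | ∃ f : Polynomial ℤ, f ∣ X ^ (2 * q ^ b) - 1 ∧ Height f = h} :=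
    lower_bound hq hodd b hb
  have ub : ∀ h ∈ {h : ℕ | ∃ f : Polynomial ℤ, f ∣ X ^ (2 * q ^ b) - 1 ∧ Height f = h},
      h ≤ 2 := by
    rintro h ⟨f, hf, rfl⟩
    exact upper_bound hq hodd b hb f hf
  unfold B
  exact le_antisymm (csSup_le ⟨2, h2mem⟩ ub) (le_csSup ⟨2, ub⟩ h2mem)
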